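/- Let G ∈ R^{n×n}, p ∈ R^n nonzero, y = Gp, and suppose the symmetric part G_S of G is positive definite. Then β₁ = (pᵀp)/(pᵀy) and β₂ = (pᵀy)/(yᵀy) are positive and satisfy 1/λ_max(G_S) ≤ β₁ ≤ 1/λ_min(G_S) and λ_min(G_S)/λ_max(GᵀG) ≤ β₂ ≤ λ_max(G_S)/λ_min(GᵀG). -/

import Mathlib

open Matrix

lemma key_dot {n : ℕ} (U : Matrix (Fin n) (Fin n) ℝ) (p x : Fin n → ℝ) :
    p ⬝ᵥ (U *ᵥ x) = (star U *ᵥ p) ⬝ᵥ x := by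
  simp only [dotProduct, Matrix.mulVec, dotProduct, Finset.mul_sum,
    Finset.sum_mul]
  rw [Finset.sum_comm]
  refine Finset.sum_congr rfl fun i _ => Finset.sum_congr rfl fun j _ => ?_
  simp only [Matrix.star_apply, star_trivial]
  ring

lemma herm_form {n : ℕ} (U : Matrix (Fin n) (Fin n) ℝ) (hUU : U * star U = 1)
    (d : Fin n → ℝ) (p : Fin n → ℝ) :
    ∃ q : Fin n → ℝ, p ⬝ᵥ ((U * diagonal d * star U) *ᵥ p) = ∑ i, d i * (q i * q i) ∧
      p ⬝ᵥ p = ∑ i, q i * q i := by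
  refine ⟨star U *ᵥ p, ?_, ?_⟩
  · rw [← Matrix.mulVec_mulVec, ← Matrix.mulVec_mulVec, key_dot]
    simp only [dotProduct, Matrix.mulVec_diagonal]
    exact Finset.sum_congr rfl fun i _ => by ring
  · have : (∑ i, (star U *ᵥ p) i * (star U *ᵥ p) i) = (star U *ᵥ p) ⬝ᵥ (star U *ᵥ p) := rfl
    rw [this, ← key_dot, Matrix.mulVec_mulVec, hUU, Matrix.one_mulVec]

lemma quad_bounds {n : ℕ} (hn : 0 < n) (A : Matrix (Fin n) (Fin n) ℝ)
    (hA : A.IsHermitian) (p : Fin n → ℝ) :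
    (⨅ i, hA.eigenvalues i) * (p ⬝ᵥ p) ≤ p ⬝ᵥ A.mulVec p ∧
    p ⬝ᵥ A.mulVec p ≤ (⨆ i, hA.eigenvalues i) * (p ⬝ᵥ p) := by
  haveI : Nonempty (Fin n) := Fin.pos_iff_nonempty.mp hn
  have hUU : (hA.eigenvectorUnitary : Matrix (Fin n) (Fin n) ℝ) *
      star (hA.eigenvectorUnitary : Matrix (Fin n) (Fin n) ℝ) = 1 :=
    (Matrix.mem_unitaryGroup_iff).mp hA.eigenvectorUnitary.2
  have hd : (RCLike.ofReal ∘ hA.eigenvalues : Fin n → ℝ) = hA.eigenvalues := by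
    ext i; simp
  obtain ⟨q, h1, h2⟩ := herm_form (hA.eigenvectorUnitary : Matrix (Fin n) (Fin n) ℝ)
    hUU hA.eigenvalues p
  have hform : p ⬝ᵥ A.mulVec p = ∑ i, hA.eigenvalues i * (q i * q i) := by
    conv_lhs => rw [hA.spectral_theorem, hd]
    exact h1
  constructor
  · rw [hform, h2, Finset.mul_sum]
    refine Finset.sum_le_sum fun i _ => ?_
    exact mul_le_mul_of_nonneg_right (ciInf_le (Finite.bddBelow_range _) i) (mul_self_nonneg _)
  · rw [hform, h2, Finset.mul_sum]
    refine Finset.sum_le_sum fun i _ => ?_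
    exact mul_le_mul_of_nonneg_right (le_ciSup (Finite.bddAbove_range _) i) (mul_self_nonneg _)

theorem stmt_7 {n : ℕ} (hn : 0 < n) (G : Matrix (Fin n) (Fin n) ℝ)
    (hGS : (((1/2 : ℝ) • (G + Gᵀ))).PosDef)
    (hGtG : (Gᵀ * G).IsHermitian)
    (p : Fin n → ℝ) (hp : p ≠ 0) :
    0 < (p ⬝ᵥ p) / (p ⬝ᵥ G.mulVec p) ∧
    0 < (p ⬝ᵥ G.mulVec p) / (G.mulVec p ⬝ᵥ G.mulVec p) ∧
    1 / (⨆ i, hGS.1.eigenvalues i) ≤ (p ⬝ᵥ p) / (p ⬝ᵥ G.mulVec p) ∧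
    (p ⬝ᵥ p) / (p ⬝ᵥ G.mulVec p) ≤ 1 / (⨅ i, hGS.1.eigenvalues i) ∧
    (⨅ i, hGS.1.eigenvalues i) / (⨆ i, hGtG.eigenvalues i) ≤
        (p ⬝ᵥ G.mulVec p) / (G.mulVec p ⬝ᵥ G.mulVec p) ∧
    (p ⬝ᵥ G.mulVec p) / (G.mulVec p ⬝ᵥ G.mulVec p) ≤
        (⨆ i, hGS.1.eigenvalues i) / (⨅ i, hGtG.eigenvalues i) := by
  haveI : Nonempty (Fin n) := Fin.pos_iff_nonempty.mp hn
  have hsym : ∀ x : Fin n → ℝ, x ⬝ᵥ Gᵀ.mulVec x = x ⬝ᵥ G.mulVec x := by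
    intro x
    rw [Matrix.mulVec_transpose, dotProduct_comm, ← Matrix.dotProduct_mulVec]
  have hb_eq : ∀ x : Fin n → ℝ, x ⬝ᵥ G.mulVec x = x ⬝ᵥ ((1/2 : ℝ) • (G + Gᵀ)).mulVec x := by
    intro x
    rw [Matrix.smul_mulVec, Matrix.add_mulVec, dotProduct_smul, dotProduct_add, hsym]
    simp only [smul_eq_mul]
    ring
  have hc_eq : ∀ x : Fin n → ℝ, G.mulVec x ⬝ᵥ G.mulVec x = x ⬝ᵥ (Gᵀ * G).mulVec x := by
    intro x
    rw [← Matrix.mulVec_mulVec]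
    conv_rhs => rw [Matrix.dotProduct_mulVec, Matrix.vecMul_transpose]
  have hselfnn : ∀ v : Fin n → ℝ, (0:ℝ) ≤ v ⬝ᵥ v := fun v =>
    Finset.sum_nonneg fun i _ => mul_self_nonneg _
  have hselfpos : ∀ v : Fin n → ℝ, v ≠ 0 → (0:ℝ) < v ⬝ᵥ v := by
    intro v hv
    rcases lt_or_eq_of_le (hselfnn v) with h | h
    · exact h
    · exact absurd (dotProduct_self_eq_zero.mp h.symm) hv
  have ha : 0 < p ⬝ᵥ p := hselfpos p hp
  have hbpos : 0 < p ⬝ᵥ G.mulVec p := by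
    have := hGS.dotProduct_mulVec_pos hp
    rw [star_trivial] at this
    rw [hb_eq]; exact this
  have hGx : ∀ x : Fin n → ℝ, x ≠ 0 → G.mulVec x ≠ 0 := by
    intro x hx h
    have h1 : x ⬝ᵥ G.mulVec x = 0 := by rw [h]; simp
    have := hGS.dotProduct_mulVec_pos hx
    rw [star_trivial, ← hb_eq] at this
    linarith
  have hcpos : 0 < G.mulVec p ⬝ᵥ G.mulVec p := hselfpos _ (hGx p hp)
  have hGtGpd : (Gᵀ * G).PosDef := by
    refine Matrix.PosDef.of_dotProduct_mulVec_pos hGtG fun x hx => ?_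
    rw [star_trivial, ← hc_eq]
    exact hselfpos _ (hGx x hx)
  -- eigenvalue positivity
  have hmpos : 0 < ⨅ i, hGS.1.eigenvalues i := by
    obtain ⟨i, hi⟩ := exists_eq_ciInf_of_finite (f := hGS.1.eigenvalues)
    rw [← hi]; exact hGS.eigenvalues_pos i
  have hμpos : 0 < ⨅ i, hGtG.eigenvalues i := by
    obtain ⟨i, hi⟩ := exists_eq_ciInf_of_finite (f := hGtG.eigenvalues)
    rw [← hi]; exact hGtGpd.eigenvalues_pos i
  have hMpos : 0 < ⨆ i, hGS.1.eigenvalues i := by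
    obtain ⟨i, hi⟩ := exists_eq_ciSup_of_finite (f := hGS.1.eigenvalues)
    rw [← hi]; exact hGS.eigenvalues_pos i
  have hKpos : 0 < ⨆ i, hGtG.eigenvalues i := by
    obtain ⟨i, hi⟩ := exists_eq_ciSup_of_finite (f := hGtG.eigenvalues)
    rw [← hi]; exact hGtGpd.eigenvalues_pos i
  -- quadratic form bounds
  obtain ⟨hbl, hbu⟩ := quad_bounds hn _ hGS.1 p
  rw [← hb_eq] at hbl hbu
  obtain ⟨hcl, hcu⟩ := quad_bounds hn _ hGtG p
  rw [← hc_eq] at hcl hcu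
  refine ⟨div_pos ha hbpos, div_pos hbpos hcpos, ?_, ?_, ?_, ?_⟩
  · rw [div_le_div_iff₀ hMpos hbpos]
    nlinarith
  · rw [div_le_div_iff₀ hbpos hmpos]
    nlinarith
  · rw [div_le_div_iff₀ hKpos hcpos]
    nlinarith [mul_le_mul_of_nonneg_left hcu hmpos.le,
      mul_le_mul_of_nonneg_left hbl hKpos.le]
  · rw [div_le_div_iff₀ hcpos hμpos]
    nlinarith [mul_le_mul_of_nonneg_left hbu hμpos.le,
      mul_le_mul_of_nonneg_left hcl hMpos.le]
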